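/- (Proposition 3.1, equivariant part, single layer.) Let V = Fin n, H and E types, h : V → H node features, e : V → V → E edge features, N : V → Finset V neighborhoods, φ_m : H → H → ℝ → E → M with M an additive commutative monoid, and φ_x : M → ℝ an arbitrary scalar-valued function. For coordinates y : V → (Fin 3 → ℝ) define the equivariant layer output f⃗(y) : V → (Fin 3 → ℝ) by f⃗(y) i = y i + ∑ j ∈ N i, φ_x (φ_m (h i) (h j) (‖y i − y j‖²) (e i j)) • (y i − y j). Let μ, μ_g, t ∈ ℝ³, Q ∈ O(3) orthogonal with μ_g = Q.mulVec μ + t, and L, L_g invertible 3×3 real matrices with L_g * L_gᵀ = Q * L * Lᵀ * Qᵀ; set F(v) = L⁻¹.mulVec (v − μ), F⁻¹(v) = L.mulVec v + μ, F_g(v) = L_g⁻¹.mulVec (v − μ_g), F_g⁻¹(v) = L_g.mulVec v + μ_g. Then for any coordinates x : V → (Fin 3 → ℝ) and every node i, Q.mulVec (F⁻¹ (f⃗(fun k => F (x k)) i)) + t = F_g⁻¹ (f⃗(fun k => F_g (Q.mulVec (x k) + t)) i); i.e., computing the equivariant layer in the standard space and mapping back with F⁻¹ commutes with rigid motions. 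-/

import Mathlib

open Matrix

/-- View a vector `Fin 3 → ℝ` as a point of Euclidean space (ℓ² norm). -/
noncomputable def toE (v : Fin 3 → ℝ) : EuclideanSpace ℝ (Fin 3) :=
  (WithLp.equiv 2 (Fin 3 → ℝ)).symm v

lemma norm_toE_sq (w : Fin 3 → ℝ) : ‖toE w‖ ^ 2 = w ⬝ᵥ w := by
  rw [← real_inner_self_eq_norm_sq]
  simp only [toE, WithLp.equiv_symm_apply, EuclideanSpace.inner_eq_star_dotProduct, dotProduct, mul_comm, star_trivial]

lemma norm_toE_mulVec (R : Matrix (Fin 3) (Fin 3) ℝ) (hR : Rᵀ * R = 1)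
    (w : Fin 3 → ℝ) : ‖toE (R.mulVec w)‖ = ‖toE w‖ := by
  have h2 : ‖toE (R.mulVec w)‖ ^ 2 = ‖toE w‖ ^ 2 := by
    rw [norm_toE_sq, norm_toE_sq, Matrix.dotProduct_mulVec, ← Matrix.mulVec_transpose,
      Matrix.mulVec_mulVec, hR, Matrix.one_mulVec]
  nlinarith [norm_nonneg (toE (R.mulVec w)), norm_nonneg (toE w), h2]

/-- Proposition 3.1, equivariant part (single layer): computing the equivariant
coordinate update of a scalarization-based E(3)-equivariant GNN layer in the
standard space and mapping back with `F⁻¹` commutes with rigid motions. -/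
theorem gnn_equivariant_output_equivariant
    (n : ℕ) (H E M : Type*) [AddCommMonoid M]
    (h : Fin n → H) (e : Fin n → Fin n → E) (N : Fin n → Finset (Fin n))
    (φm : H → H → ℝ → E → M) (φx : M → ℝ)
    (μ μg t : Fin 3 → ℝ) (Q L Lg : Matrix (Fin 3) (Fin 3) ℝ)
    (hQ : Q ∈ Matrix.orthogonalGroup (Fin 3) ℝ)
    (hμ : μg = Q.mulVec μ + t)
    (hL : IsUnit L.det) (hLg : IsUnit Lg.det)
    (hcov : Lg * Lgᵀ = Q * L * Lᵀ * Qᵀ)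
    (fvec : (Fin n → (Fin 3 → ℝ)) → Fin n → (Fin 3 → ℝ))
    (hfvec : ∀ (y : Fin n → (Fin 3 → ℝ)) (i : Fin n),
      fvec y i = y i + ∑ j ∈ N i,
        φx (φm (h i) (h j) (‖toE (y i) - toE (y j)‖ ^ 2) (e i j)) • (y i - y j))
    (x : Fin n → (Fin 3 → ℝ)) (i : Fin n) :
    Q.mulVec (L.mulVec (fvec (fun k => L⁻¹.mulVec (x k - μ)) i) + μ) + t
      = Lg.mulVec (fvec (fun k => Lg⁻¹.mulVec (Q.mulVec (x k) + t - μg)) i) + μg := by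
  set R : Matrix (Fin 3) (Fin 3) ℝ := Lg⁻¹ * Q * L with hRdef
  set y : Fin n → (Fin 3 → ℝ) := fun k => L⁻¹.mulVec (x k - μ) with hy
  -- R Rᵀ = 1
  have hRRt : R * Rᵀ = 1 := by
    have : R * Rᵀ = Lg⁻¹ * (Q * L * Lᵀ * Qᵀ) * Lg⁻¹ᵀ := by
      simp [hRdef, Matrix.transpose_mul, Matrix.mul_assoc]
    rw [this, ← hcov, Matrix.transpose_nonsing_inv]
    rw [show Lg⁻¹ * (Lg * Lgᵀ) * Lgᵀ⁻¹ = Lg⁻¹ * Lg * (Lgᵀ * Lgᵀ⁻¹) by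
      simp [Matrix.mul_assoc]]
    rw [Matrix.nonsing_inv_mul _ hLg, Matrix.mul_nonsing_inv _ (by simpa using hLg)]
    simp
  have hRtR : Rᵀ * R = 1 := mul_eq_one_comm.mp hRRt
  -- transformed inputs
  have hyk : ∀ k, Lg⁻¹.mulVec (Q.mulVec (x k) + t - μg) = R.mulVec (y k) := by
    intro k
    have hx : x k - μ = L.mulVec (y k) := by
      rw [hy, Matrix.mulVec_mulVec, Matrix.mul_nonsing_inv _ hL, Matrix.one_mulVec]
    have : Q.mulVec (x k) + t - μg = Q.mulVec (x k - μ) := by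
      rw [hμ, Matrix.mulVec_sub]; abel
    rw [this, hx, Matrix.mulVec_mulVec, Matrix.mulVec_mulVec, hRdef]
  have key : fvec (fun k => Lg⁻¹.mulVec (Q.mulVec (x k) + t - μg)) i
      = R.mulVec (fvec y i) := by
    rw [hfvec, hfvec]
    simp only [hyk, Matrix.mulVec_add]
    congr 1
    rw [show (R.mulVec (∑ j ∈ N i,
        φx (φm (h i) (h j) (‖toE (y i) - toE (y j)‖ ^ 2) (e i j)) • (y i - y j)))
        = ∑ j ∈ N i, φx (φm (h i) (h j) (‖toE (y i) - toE (y j)‖ ^ 2) (e i j)) •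
          R.mulVec (y i - y j) from by
      rw [← Matrix.mulVecLin_apply, map_sum]; simp [Matrix.mulVecLin_apply]]
    refine Finset.sum_congr rfl fun j _ => ?_
    have hnorm : ‖toE (R.mulVec (y i)) - toE (R.mulVec (y j))‖
        = ‖toE (y i) - toE (y j)‖ := by
      have h1 : toE (R.mulVec (y i)) - toE (R.mulVec (y j))
          = toE (R.mulVec (y i - y j)) := by
        simp [toE, Matrix.mulVec_sub]
      have h2 : toE (y i) - toE (y j) = toE (y i - y j) := rfl
      rw [h1, h2, norm_toE_mulVec R hRtR]
    rw [hnorm, Matrix.mulVec_sub]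
  rw [key, Matrix.mulVec_mulVec, hRdef,
    show Lg * (Lg⁻¹ * Q * L) = Lg * Lg⁻¹ * (Q * L) by simp [Matrix.mul_assoc],
    Matrix.mul_nonsing_inv _ hLg, Matrix.one_mul, hμ, ← Matrix.mulVec_mulVec,
    Matrix.mulVec_add]
  abel
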